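/- Let n ≥ 2, 1 ≤ k < h ≤ n, y ∈ F, and set Y = y(E_{n+1-h,k} - E_{n+1-k,h}) ∈ Mat_n(F). Let X ∈ Mat_n(F) be written as X = Σ_{1≤i<j≤n} x_{i,j}(E_{i,n+1-j} - E_{j,n+1-i}), and assume x_{k,h} = 0. Then YXY = 0. -/

import Mathlib

lemma std_mul_std {F : Type*} [Field F] {n : ℕ} (a b c d : Fin n)
    (M : Matrix (Fin n) (Fin n) F) :
    Matrix.single a b 1 * M * Matrix.single c d 1
      = M b c • Matrix.single a d 1 := by
  ext i j
  simp [Matrix.mul_apply, Matrix.single, Finset.sum_ite_eq, Finset.sum_ite_eq',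
    mul_comm, Finset.mul_sum, Finset.sum_mul, ite_and]
  by_cases hi : a = i <;> by_cases hj : d = j <;> simp [hi, hj, mul_comm]

lemma X_entry {F : Type*} [Field F] {n : ℕ} (x : Fin n → Fin n → F) (a b : Fin n) :
    (∑ i : Fin n, ∑ j : Fin n,
      if i < j then
        x i j • (Matrix.single i j.rev 1 - Matrix.single j i.rev 1)
      else 0 : Matrix (Fin n) (Fin n) F) a b
      = (if a < b.rev then x a b.rev else 0) - (if b.rev < a then x b.rev a else 0) := by
  have split : ∀ (c : Prop) [Decidable c] (p q : F),
      (if c then p - q else 0) = (if c then p else 0) - (if c then q else 0) := by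
    intros c _ p q; split <;> simp
  simp only [Matrix.sum_apply, Matrix.smul_apply, Matrix.sub_apply, Matrix.zero_apply,
    Matrix.single, Matrix.of_apply, apply_ite (fun M : Matrix (Fin n) (Fin n) F => M a b),
    Fin.rev_eq_iff, ite_and, smul_eq_mul, mul_sub, mul_ite, mul_one, mul_zero,
    split, Finset.sum_sub_distrib]
  congr 1
  · rw [Finset.sum_eq_single a]
    · rw [Finset.sum_eq_single b.rev]
      · by_cases hab : a < b.rev <;> simp [hab]
      · intro j _ hj; simp [hj, Ne.symm hj]
      · simp
    · intro i _ hi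
      apply Finset.sum_eq_zero; intro j _; simp [hi, Ne.symm hi]
    · simp
  · rw [Finset.sum_eq_single b.rev]
    · rw [Finset.sum_eq_single a]
      · by_cases hab : b.rev < a <;> simp [hab]
      · intro j _ hj; simp [hj, Ne.symm hj]
      · simp
    · intro i _ hi
      apply Finset.sum_eq_zero; intro j _; simp [hi, Ne.symm hi]
    · simp

/-- If `Y = y (E_{n+1-h,k} - E_{n+1-k,h})` and `X = Σ_{i<j} x_{i,j}(E_{i,n+1-j} - E_{j,n+1-i})`
with `x_{k,h} = 0`, then `YXY = 0`. -/
theorem stmt1 {F : Type*} [Field F] {n : ℕ} (hn : 2 ≤ n)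
    (k h : Fin n) (hkh : k < h) (y : F) (x : Fin n → Fin n → F)
    (Y X : Matrix (Fin n) (Fin n) F)
    (hY : Y = y • (Matrix.single h.rev k 1 - Matrix.single k.rev h 1))
    (hX : X = ∑ i : Fin n, ∑ j : Fin n,
      if i < j then
        x i j • (Matrix.single i j.rev 1 - Matrix.single j i.rev 1)
      else 0)
    (hx : x k h = 0) :
    Y * X * Y = 0 := by
  have e1 : X k h.rev = 0 := by
    rw [hX, X_entry]; simp [Fin.rev_rev, hkh, not_lt_of_gt hkh, hx]
  have e2 : X k k.rev = 0 := by
    rw [hX, X_entry]; simp [Fin.rev_rev]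
  have e3 : X h h.rev = 0 := by
    rw [hX, X_entry]; simp [Fin.rev_rev]
  have e4 : X h k.rev = 0 := by
    rw [hX, X_entry]; simp [Fin.rev_rev, hkh, not_lt_of_gt hkh, hx]
  rw [hY]
  simp only [Matrix.smul_mul, Matrix.mul_smul, smul_smul, sub_mul, Matrix.mul_sub, std_mul_std,
    e1, e2, e3, e4]
  simp
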